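/- A group G is bi-orderable if and only if for every nontrivial finitely normally generated subgroup N of G there exists a group H and a surjective homomorphism φ : G → H such that φ(N) is nontrivial and admits a bi-ordering invariant under conjugation by all elements of H. -/

import Mathlib

namespace BurnsHaleAux

def conjSet {G : Type*} [Group G] (T : Set G) : Set G :=
  {x | ∃ t ∈ T, ∃ h : G, x = h⁻¹ * t * h}
def NS {G : Type*} [Group G] (T : Set G) : Subsemigroup G :=
  Subsemigroup.closure (conjSet T)

section
variable {G : Type*} [Group G]

lemma conj_mem_NS {T : Set G} {t : G} (ht : t ∈ T) (h : G) : h⁻¹ * t * h ∈ NS T :=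
  Subsemigroup.subset_closure ⟨t, ht, h, rfl⟩

lemma self_mem_NS {T : Set G} {t : G} (ht : t ∈ T) : t ∈ NS T := by
  have := conj_mem_NS ht 1; simpa using this

lemma NS_mono {T T' : Set G} (h : T ⊆ T') : NS T ≤ NS T' :=
  Subsemigroup.closure_mono (fun x hx => by
    obtain ⟨t, ht, k, hk⟩ := hx; exact ⟨t, h ht, k, hk⟩)

lemma NS_empty : (1 : G) ∉ NS (∅ : Set G) := by
  have : conjSet (∅ : Set G) = ∅ := by simp [conjSet]
  rw [NS, this, Subsemigroup.closure_empty]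
  exact Subsemigroup.notMem_bot

def sgn (σ : G → Bool) (g : G) : G := if σ g then g else g⁻¹

lemma conj_ne_one {g : G} (hg : g ≠ 1) (h : G) : h⁻¹ * g * h ≠ 1 := by
  intro he
  apply hg
  have : g = h * (h⁻¹ * g * h) * h⁻¹ := by group
  rw [this, he]; group

end

lemma key {G : Type u} [Group G]
    (hyp : ∀ N : Subgroup G, (∃ S : Set G, S.Finite ∧ N = Subgroup.normalClosure S) →
        N ≠ ⊥ →
        ∃ (H : Type u) (_ : Group H) (φ : G →* H), Function.Surjective φ ∧
          Subgroup.map φ N ≠ ⊥ ∧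
          ∃ P : Set H, P ⊆ (Subgroup.map φ N : Set H) ∧
            (∀ a ∈ P, ∀ b ∈ P, a * b ∈ P) ∧
            (∀ g : H, g ∈ Subgroup.map φ N → g ≠ 1 → (g ∈ P ↔ g⁻¹ ∉ P)) ∧
            (∀ g ∈ P, ∀ h : H, h⁻¹ * g * h ∈ P)) :
    ∀ (n : ℕ) (F : Finset G), F.card ≤ n → (1 : G) ∉ F →
      ∃ σ : G → Bool, (1 : G) ∉ NS (sgn σ '' ↑F) := by
  classical
  intro n
  induction n with
  | zero =>
    intro F hF _
    have hFe : F = ∅ := Finset.card_eq_zero.mp (Nat.le_zero.mp hF)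
    subst hFe
    exact ⟨fun _ => true, by simpa using NS_empty⟩
  | succ n ih =>
    intro F hF h1F
    by_cases hFe : F = ∅
    · subst hFe
      exact ⟨fun _ => true, by simpa using NS_empty⟩
    obtain ⟨g₀, hg₀⟩ := Finset.nonempty_iff_ne_empty.mpr hFe
    have hNbot : Subgroup.normalClosure (↑F : Set G) ≠ ⊥ := by
      intro hbot
      have hmem : g₀ ∈ Subgroup.normalClosure (↑F : Set G) :=
        Subgroup.subset_normalClosure (Finset.mem_coe.mpr hg₀)
      rw [hbot, Subgroup.mem_bot] at hmem
      exact h1F (hmem ▸ hg₀)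
    obtain ⟨H, instH, φ, hsurj, hmap, P, hPsub, hPmul, hPtri, hPconj⟩ :=
      hyp (Subgroup.normalClosure (↑F : Set G)) ⟨↑F, F.finite_toSet, rfl⟩ hNbot
    -- replace P by Q := P \ {1}
    set Q : Set H := P \ {1} with hQdef
    have hQ1 : (1 : H) ∉ Q := fun h => h.2 rfl
    have hQtri : ∀ g : H, g ∈ Subgroup.map φ (Subgroup.normalClosure (↑F : Set G)) →
        g ≠ 1 → (g ∈ Q ↔ g⁻¹ ∉ Q) := by
      intro g hgmem hg
      have h1 : g ∈ Q ↔ g ∈ P := ⟨fun h => h.1, fun h => ⟨h, hg⟩⟩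
      have h2 : g⁻¹ ∈ Q ↔ g⁻¹ ∈ P := ⟨fun h => h.1, fun h => ⟨h, inv_ne_one.mpr hg⟩⟩
      rw [h1, hPtri g hgmem hg]
      exact (not_congr h2).symm
    have hQmul : ∀ a ∈ Q, ∀ b ∈ Q, a * b ∈ Q := by
      intro a ha b hb
      refine ⟨hPmul a ha.1 b hb.1, ?_⟩
      intro hab
      have hbinv : b = a⁻¹ := eq_inv_of_mul_eq_one_right hab
      have ha1 : a ≠ 1 := ha.2
      have : a⁻¹ ∉ P := (hPtri a (hPsub ha.1) ha1).mp ha.1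
      exact this (hbinv ▸ hb.1)
    have hQconj : ∀ g ∈ Q, ∀ h : H, h⁻¹ * g * h ∈ Q :=
      fun g hg h => ⟨hPconj g hg.1 h, conj_ne_one hg.2 h⟩
    -- there is an element of F not killed by φ
    have hex : ∃ g ∈ F, φ g ≠ 1 := by
      by_contra hall
      push_neg at hall
      apply hmap
      rw [Subgroup.map_normalClosure _ _ hsurj]
      have himg : ⇑φ '' ↑F ⊆ ((⊥ : Subgroup H) : Set H) := by
        rintro _ ⟨g, hg, rfl⟩
        simp [hall g hg]
      exact le_bot_iff.mp (Subgroup.normalClosure_le_normal himg)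
    obtain ⟨gw, hgwF, hgw⟩ := hex
    -- the kernel part
    set F₁ : Finset G := F.filter (fun g => φ g = 1) with hF₁def
    have hF₁sub : F₁ ⊆ F := Finset.filter_subset _ _
    have hF₁card : F₁.card ≤ n := by
      have hss : F₁ ⊂ F := by
        refine ⟨hF₁sub, fun hsub => ?_⟩
        have := Finset.mem_filter.mp (hsub hgwF)
        exact hgw this.2
      have := Finset.card_lt_card hss
      omega
    obtain ⟨σ₁, hσ₁⟩ := ih F₁ hF₁card (fun h => h1F (hF₁sub h))
    -- the combined sign function
    set σ : G → Bool := fun g => if φ g = 1 then σ₁ g else decide (φ g ∈ Q) with hσdef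
    -- everything in NS of the kernel part maps to 1
    have hA : ∀ x ∈ NS (sgn σ₁ '' (↑F₁ : Set G)), φ x = 1 := by
      intro x hx
      induction hx using Subsemigroup.closure_induction with
      | mem x hx =>
        obtain ⟨t, ⟨g, hg, rfl⟩, h, rfl⟩ := hx
        have hφg : φ g = 1 := (Finset.mem_filter.mp hg).2
        have : φ (sgn σ₁ g) = 1 := by
          unfold sgn
          by_cases h' : σ₁ g <;> simp [h', hφg]
        simp [map_mul, map_inv, this]
      | mul x y _ _ hx hy => simp [map_mul, hx, hy]
    -- main structural dichotomy
    have hB : ∀ x ∈ NS (sgn σ '' (↑F : Set G)),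
        φ x ∈ Q ∨ x ∈ NS (sgn σ₁ '' (↑F₁ : Set G)) := by
      intro x hx
      induction hx using Subsemigroup.closure_induction with
      | mem x hx =>
        obtain ⟨t, ⟨g, hg, rfl⟩, h, rfl⟩ := hx
        by_cases hφg : φ g = 1
        · right
          have hgF₁ : g ∈ F₁ := Finset.mem_filter.mpr ⟨hg, hφg⟩
          have hsgn : sgn σ g = sgn σ₁ g := by
            unfold sgn
            rw [hσdef]; simp [hφg]
          rw [hsgn]
          exact conj_mem_NS (Set.mem_image_of_mem _ (Finset.mem_coe.mpr hgF₁)) h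
        · left
          have hgN : φ g ∈ Subgroup.map φ (Subgroup.normalClosure (↑F : Set G)) :=
            ⟨g, Subgroup.subset_normalClosure (Finset.mem_coe.mpr hg), rfl⟩
          have htri := hQtri (φ g) hgN hφg
          have hσg : σ g = decide (φ g ∈ Q) := by rw [hσdef]; simp [hφg]
          by_cases hin : φ g ∈ Q
          · have hsgn : sgn σ g = g := by unfold sgn; simp [hσg, hin]
            rw [hsgn]
            have : φ (h⁻¹ * g * h) = (φ h)⁻¹ * φ g * φ h := by simp [map_mul, map_inv]
            rw [this]
            exact hQconj _ hin _
          · have hinv : (φ g)⁻¹ ∈ Q := by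
              by_contra h'
              exact hin (htri.mpr h')
            have hsgn : sgn σ g = g⁻¹ := by unfold sgn; simp [hσg, hin]
            rw [hsgn]
            have : φ (h⁻¹ * g⁻¹ * h) = (φ h)⁻¹ * (φ g)⁻¹ * φ h := by
              simp [map_mul, map_inv]
            rw [this]
            exact hQconj _ hinv _
      | mul x y hxm hym hx hy =>
        rcases hx with hx | hx
        · rcases hy with hy | hy
          · left; rw [map_mul]; exact hQmul _ hx _ hy
          · left; rw [map_mul, hA y hy, mul_one]; exact hx
        · rcases hy with hy | hy
          · left; rw [map_mul, hA x hx, one_mul]; exact hy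
          · right; exact mul_mem hx hy
    refine ⟨σ, fun hmem => ?_⟩
    rcases hB 1 hmem with h | h
    · rw [map_one] at h
      exact hQ1 h
    · exact hσ₁ h

end BurnsHaleAux


open BurnsHaleAux in
/-- A group is bi-orderable if it admits a strict total order invariant under
both left and right multiplication. -/
def BiOrderable (G : Type*) [Group G] : Prop :=
  ∃ r : G → G → Prop, IsStrictTotalOrder G r ∧
    (∀ f g h : G, r g h → r (f * g) (f * h)) ∧
    (∀ f g h : G, r g h → r (g * f) (h * f))

open BurnsHaleAux in
/-- **Burns–Hale analog for bi-orderable groups.** `G` is bi-orderable iff for every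
nontrivial finitely normally generated subgroup `N` there is a surjection
`φ : G → H` with `φ(N)` nontrivial and bi-orderable by an ordering (given here by
its positive cone `P`) invariant under conjugation by all of `H`. -/
theorem biOrderable_iff {G : Type u} [Group G] :
    BiOrderable G ↔
      ∀ N : Subgroup G, (∃ S : Set G, S.Finite ∧ N = Subgroup.normalClosure S) →
        N ≠ ⊥ →
        ∃ (H : Type u) (_ : Group H) (φ : G →* H), Function.Surjective φ ∧
          Subgroup.map φ N ≠ ⊥ ∧
          ∃ P : Set H, P ⊆ (Subgroup.map φ N : Set H) ∧
            (∀ a ∈ P, ∀ b ∈ P, a * b ∈ P) ∧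
            (∀ g : H, g ∈ Subgroup.map φ N → g ≠ 1 → (g ∈ P ↔ g⁻¹ ∉ P)) ∧
            (∀ g ∈ P, ∀ h : H, h⁻¹ * g * h ∈ P) := by
  constructor
  · -- forward direction: take `H = G`, `φ = id`, `P` the positive elements of `N`
    rintro ⟨r, hsto, hleft, hright⟩ N hNfg hNbot
    haveI := hsto
    haveI hNormal : N.Normal := by
      obtain ⟨S, _, rfl⟩ := hNfg
      exact Subgroup.normalClosure_normal
    refine ⟨G, ‹Group G›, MonoidHom.id G, Function.surjective_id, ?_,
      {g | g ∈ N ∧ r 1 g}, ?_, ?_, ?_, ?_⟩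
    · rw [Subgroup.map_id]; exact hNbot
    · rw [Subgroup.map_id]; exact fun g hg => hg.1
    · rintro a ⟨haN, ha⟩ b ⟨hbN, hb⟩
      refine ⟨N.mul_mem haN hbN, ?_⟩
      have h1 : r a (a * b) := by have := hleft a 1 b hb; simpa using this
      exact trans_of r ha h1
    · intro g hgmem hg
      rw [Subgroup.map_id] at hgmem
      simp only [Set.mem_setOf_eq]
      constructor
      · rintro ⟨_, h⟩ ⟨_, h'⟩
        have h2 : r g 1 := by have := hright g 1 g⁻¹ h'; simpa using this
        exact irrefl_of r 1 (trans_of r h h2)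
      · intro hne
        refine ⟨hgmem, ?_⟩
        rcases trichotomous_of r 1 g⁻¹ with h | h | h
        · exact absurd ⟨N.inv_mem hgmem, h⟩ hne
        · exact absurd h.symm (inv_ne_one.mpr hg)
        · have := hright g g⁻¹ 1 h; simpa using this
    · rintro g ⟨hgN, hg⟩ h
      refine ⟨?_, ?_⟩
      · have := hNormal.conj_mem g hgN h⁻¹
        simpa using this
      · have h1 := hleft h⁻¹ 1 g hg
        have h2 := hright h _ _ h1
        simpa using h2
  · -- backward direction: Burns–Hale-type compactness argument
    intro hyp
    classical
    have hc : ∀ F : Finset G, ∃ τ : G → Bool,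
        (1 : G) ∉ NS (sgn τ '' ↑(F.erase 1)) :=
      fun F => key hyp (F.erase 1).card (F.erase 1) le_rfl (Finset.notMem_erase _ _)
    choose c hcspec using hc
    set U : Ultrafilter (Finset G) := Ultrafilter.of Filter.atTop with hUdef
    set σ : G → Bool := fun g => if {F : Finset G | c F g = true} ∈ U then true else false
      with hσdef
    have hσU : ∀ g : G, {F : Finset G | c F g = σ g} ∈ U := by
      intro g
      by_cases h : {F : Finset G | c F g = true} ∈ U
      · have hg : σ g = true := by rw [hσdef]; simp [h]
        rw [hg]; exact h
      · have hg : σ g = false := by rw [hσdef]; simp [h]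
        rw [hg]
        have h2 : {F : Finset G | c F g = true}ᶜ ∈ U :=
          Ultrafilter.compl_mem_iff_notMem.mpr h
        have heq : {F : Finset G | c F g = true}ᶜ = {F : Finset G | c F g = false} := by
          ext F; simp
        rwa [heq] at h2
    have hmain : ∀ F₀ : Finset G, (1 : G) ∉ F₀ →
        (1 : G) ∉ NS (sgn σ '' (↑F₀ : Set G)) := by
      intro F₀ h1
      have hU1 : {F : Finset G | F₀ ≤ F} ∈ U :=
        Ultrafilter.mem_coe.mp (Filter.le_def.mp (Ultrafilter.of_le _) _ (Filter.mem_atTop F₀))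
      have hU2 : (⋂ g ∈ (↑F₀ : Set G), {F : Finset G | c F g = σ g}) ∈ U :=
        (Filter.biInter_mem F₀.finite_toSet).mpr (fun g _ => hσU g)
      obtain ⟨F, hFmem⟩ := Filter.nonempty_of_mem (Filter.inter_mem hU1 hU2)
      obtain ⟨hF1, hF2⟩ := hFmem
      have hsub : sgn σ '' (↑F₀ : Set G) ⊆ sgn (c F) '' ↑(F.erase 1) := by
        rintro _ ⟨g, hg, rfl⟩
        have hgF : g ∈ F.erase 1 :=
          Finset.mem_erase.mpr ⟨fun h => h1 (h ▸ hg), hF1 (Finset.mem_coe.mp hg)⟩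
        have hcσ : c F g = σ g := Set.mem_iInter₂.mp hF2 g hg
        exact ⟨g, Finset.mem_coe.mpr hgF, by simp [sgn, hcσ]⟩
      exact fun hmem => hcspec F (NS_mono hsub hmem)
    -- sign facts
    have hflip : ∀ g : G, g ≠ 1 → σ g = true → σ g⁻¹ = false := by
      intro g hg hσg
      by_contra h
      have hσgi : σ g⁻¹ = true := by
        cases h' : σ g⁻¹
        · exact absurd h' h
        · rfl
      have h1F : (1 : G) ∉ ({g, g⁻¹} : Finset G) := by
        simp only [Finset.mem_insert, Finset.mem_singleton]
        push_neg
        exact ⟨fun h' => hg h'.symm, fun h' => (inv_ne_one.mpr hg) h'.symm⟩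
      apply hmain {g, g⁻¹} h1F
      have e1 : g ∈ sgn σ '' (↑({g, g⁻¹} : Finset G) : Set G) :=
        ⟨g, by simp, by simp [sgn, hσg]⟩
      have e2 : g⁻¹ ∈ sgn σ '' (↑({g, g⁻¹} : Finset G) : Set G) :=
        ⟨g⁻¹, by simp, by simp [sgn, hσgi]⟩
      have hprod := mul_mem (self_mem_NS e1) (self_mem_NS e2)
      have heq : g * g⁻¹ = 1 := by group
      rwa [heq] at hprod
    have hflip' : ∀ g : G, g ≠ 1 → σ g = false → σ g⁻¹ = true := by
      intro g hg hσg
      by_contra h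
      have hσgi : σ g⁻¹ = false := by
        cases h' : σ g⁻¹
        · rfl
        · exact absurd h' h
      have h1F : (1 : G) ∉ ({g, g⁻¹} : Finset G) := by
        simp only [Finset.mem_insert, Finset.mem_singleton]
        push_neg
        exact ⟨fun h' => hg h'.symm, fun h' => (inv_ne_one.mpr hg) h'.symm⟩
      apply hmain {g, g⁻¹} h1F
      have e1 : g⁻¹ ∈ sgn σ '' (↑({g, g⁻¹} : Finset G) : Set G) :=
        ⟨g, by simp, by simp [sgn, hσg]⟩
      have e2 : g ∈ sgn σ '' (↑({g, g⁻¹} : Finset G) : Set G) :=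
        ⟨g⁻¹, by simp, by simp [sgn, hσgi]⟩
      have hprod := mul_mem (self_mem_NS e1) (self_mem_NS e2)
      have heq : g⁻¹ * g = 1 := by group
      rwa [heq] at hprod
    have hconjσ : ∀ g : G, g ≠ 1 → σ g = true → ∀ h : G, σ (h⁻¹ * g * h) = true := by
      intro g hg hσg h
      by_contra hne
      have hfalse : σ (h⁻¹ * g * h) = false := by
        cases h' : σ (h⁻¹ * g * h)
        · rfl
        · exact absurd h' hne
      have h1F : (1 : G) ∉ ({g, h⁻¹ * g * h} : Finset G) := by
        simp only [Finset.mem_insert, Finset.mem_singleton]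
        push_neg
        exact ⟨fun h' => hg h'.symm, fun h' => (conj_ne_one hg h) h'.symm⟩
      apply hmain {g, h⁻¹ * g * h} h1F
      have hg1 : g ∈ sgn σ '' (↑({g, h⁻¹ * g * h} : Finset G) : Set G) :=
        ⟨g, by simp, by simp [sgn, hσg]⟩
      have e1 : h⁻¹ * g * h ∈ NS (sgn σ '' (↑({g, h⁻¹ * g * h} : Finset G) : Set G)) :=
        conj_mem_NS hg1 h
      have e2 : (h⁻¹ * g * h)⁻¹ ∈ NS (sgn σ '' (↑({g, h⁻¹ * g * h} : Finset G) : Set G)) :=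
        self_mem_NS ⟨h⁻¹ * g * h, by simp, by simp [sgn, hfalse]⟩
      have hprod := mul_mem e1 e2
      have heq : (h⁻¹ * g * h) * (h⁻¹ * g * h)⁻¹ = 1 := by group
      rwa [heq] at hprod
    have hmulσ : ∀ g h : G, g ≠ 1 → h ≠ 1 → σ g = true → σ h = true →
        g * h ≠ 1 ∧ σ (g * h) = true := by
      intro g h hg hh hσg hσh
      have hgh : g * h ≠ 1 := by
        intro he
        have hhg : h = g⁻¹ := eq_inv_of_mul_eq_one_right he
        have := hflip g hg hσg
        rw [← hhg] at this
        rw [this] at hσh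
        exact Bool.false_ne_true hσh
      refine ⟨hgh, ?_⟩
      by_contra hne
      have hfalse : σ (g * h) = false := by
        cases h' : σ (g * h)
        · rfl
        · exact absurd h' hne
      have h1F : (1 : G) ∉ ({g, h, g * h} : Finset G) := by
        simp only [Finset.mem_insert, Finset.mem_singleton]
        push_neg
        exact ⟨fun h' => hg h'.symm, fun h' => hh h'.symm, fun h' => hgh h'.symm⟩
      apply hmain {g, h, g * h} h1F
      have e1 : g ∈ NS (sgn σ '' (↑({g, h, g * h} : Finset G) : Set G)) :=
        self_mem_NS ⟨g, by simp, by simp [sgn, hσg]⟩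
      have e2 : h ∈ NS (sgn σ '' (↑({g, h, g * h} : Finset G) : Set G)) :=
        self_mem_NS ⟨h, by simp, by simp [sgn, hσh]⟩
      have e3 : (g * h)⁻¹ ∈ NS (sgn σ '' (↑({g, h, g * h} : Finset G) : Set G)) :=
        self_mem_NS ⟨g * h, by simp, by simp [sgn, hfalse]⟩
      have hprod := mul_mem (mul_mem e1 e2) e3
      have heq : g * h * (g * h)⁻¹ = 1 := by group
      rwa [heq] at hprod
    -- the bi-invariant order
    refine ⟨fun a b => a⁻¹ * b ≠ 1 ∧ σ (a⁻¹ * b) = true, ?_, ?_, ?_⟩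
    · refine { trichotomous := ?_, irrefl := ?_, trans := ?_ }
      · intro a b
        suffices hor : (a⁻¹ * b ≠ 1 ∧ σ (a⁻¹ * b) = true) ∨ a = b ∨
            (b⁻¹ * a ≠ 1 ∧ σ (b⁻¹ * a) = true) by
          intro hn1 hn2
          rcases hor with h | h | h
          · exact absurd h hn1
          · exact h
          · exact absurd h hn2
        by_cases hab : a = b
        · exact Or.inr (Or.inl hab)
        have hne : a⁻¹ * b ≠ 1 := fun h => hab (inv_mul_eq_one.mp h)
        cases hσ : σ (a⁻¹ * b)
        · have htrue := hflip' _ hne hσ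
          have heq : (a⁻¹ * b)⁻¹ = b⁻¹ * a := by group
          rw [heq] at htrue
          refine Or.inr (Or.inr ⟨?_, htrue⟩)
          exact fun h => hab (inv_mul_eq_one.mp h).symm
        · exact Or.inl ⟨hne, rfl⟩
      · rintro a ⟨h, _⟩
        exact h (by simp)
      · rintro a b c ⟨h1, h2⟩ ⟨h3, h4⟩
        obtain ⟨hne, hσ⟩ := hmulσ _ _ h1 h3 h2 h4
        have heq : (a⁻¹ * b) * (b⁻¹ * c) = a⁻¹ * c := by group
        rw [heq] at hne hσ
        exact ⟨hne, hσ⟩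
    · rintro f a b ⟨h1, h2⟩
      have heq : (f * a)⁻¹ * (f * b) = a⁻¹ * b := by group
      exact ⟨heq ▸ h1, heq ▸ h2⟩
    · rintro f a b ⟨h1, h2⟩
      have heq : (a * f)⁻¹ * (b * f) = f⁻¹ * (a⁻¹ * b) * f := by group
      refine ⟨?_, ?_⟩
      · rw [heq]; exact conj_ne_one h1 f
      · rw [heq]; exact hconjσ _ h1 h2 f
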